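/- Let W ∈ ℝ^{n×n} be a symmetric matrix with nonnegative entries, and let β, δ, c > 0 satisfy β·c·λ(W) < δ, where λ(W) is the largest eigenvalue of W. Then the origin is a globally asymptotically stable equilibrium of the system dp_i/dt = β·c·(∑_j W_{ij} p_j)(1 − p_i) − δ·p_i on [0,1]^n; in particular every solution with initial data in [0,1]^n converges to 0 as t → ∞. -/

import Mathlib

open Filter Set Matrix

/-! Auxiliary real-analysis lemmas -/

lemma qsq_hasDerivAt (x : ℝ) : HasDerivAt (fun y : ℝ => max y 0 ^ 2) (2 * max x 0) x := by
  rcases lt_trichotomy x 0 with hx | hx | hx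
  · have : (fun y : ℝ => max y 0 ^ 2) =ᶠ[nhds x] fun _ => (0:ℝ) := by
      filter_upwards [eventually_lt_nhds hx] with y hy
      simp [max_eq_right hy.le]
    rw [max_eq_right hx.le, mul_zero]
    exact (hasDerivAt_const x (0:ℝ)).congr_of_eventuallyEq this
  · subst hx
    rw [max_self, mul_zero]
    rw [hasDerivAt_iff_tendsto]
    have h1 : ∀ y : ℝ, ‖y - 0‖⁻¹ * ‖max y 0 ^ 2 - max (0:ℝ) 0 ^ 2 - (y - 0) • (0:ℝ)‖ ≤ ‖y‖ := by
      intro y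
      simp only [sub_zero, max_self, smul_zero, ne_eq]
      rcases eq_or_ne y 0 with rfl | hy
      · simp
      · rw [show max y 0 ^ 2 - 0 ^ 2 = max y 0 ^2 by ring]
        have habs : |max y 0| ≤ |y| := by
          rw [abs_le]
          constructor
          · exact le_trans (neg_nonpos.2 (abs_nonneg y)) (le_max_right y 0)
          · exact max_le (le_abs_self y) (abs_nonneg y)
        have : ‖max y 0 ^ 2‖ ≤ ‖y‖^2 := by
          rw [Real.norm_eq_abs, Real.norm_eq_abs, abs_pow]
          exact pow_le_pow_left₀ (abs_nonneg _) habs 2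
        calc ‖y‖⁻¹ * ‖max y 0 ^2‖ ≤ ‖y‖⁻¹ * ‖y‖^2 := by
              gcongr
          _ = ‖y‖ := by field_simp [norm_ne_zero_iff.2 hy]
    have h2 : Tendsto (fun y : ℝ => ‖y‖) (nhds 0) (nhds 0) := by
      simpa using (continuous_norm (E := ℝ)).tendsto 0
    exact squeeze_zero (fun y => by positivity) h1 h2
  · have : (fun y : ℝ => max y 0 ^ 2) =ᶠ[nhds x] fun y => y ^ 2 := by
      filter_upwards [eventually_gt_nhds hx] with y hy
      simp [max_eq_left hy.le]
    rw [max_eq_left hx.le]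
    have h := (hasDerivAt_pow 2 x)
    norm_num at h
    exact h.congr_of_eventuallyEq this

lemma slope_freq {f : ℝ → ℝ} {d : ℝ} {x : ℝ} (h : HasDerivAt f d x) :
    ∀ r, d < r → ∃ᶠ z in nhdsWithin x (Ioi x), (z - x)⁻¹ * (f z - f x) < r := by
  intro r hr
  have hs : Tendsto (slope f x) (nhdsWithin x {x}ᶜ) (nhds d) :=
    hasDerivAt_iff_tendsto_slope.1 h
  have hs' : Tendsto (slope f x) (nhdsWithin x (Ioi x)) (nhds d) :=
    hs.mono_left (nhdsWithin_mono x fun z hz => ne_of_gt hz)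
  have hev : ∀ᶠ z in nhdsWithin x (Ioi x), (z - x)⁻¹ * (f z - f x) < r := by
    filter_upwards [hs' (Iio_mem_nhds hr)] with z hz
    simpa [slope_def_field, div_eq_inv_mul] using hz
  exact hev.frequently

lemma gronwall_wrap {f f' : ℝ → ℝ} {K d0 : ℝ} {b : ℝ}
    (hd : ∀ t ∈ Icc 0 b, HasDerivAt f (f' t) t)
    (h0 : f 0 ≤ d0)
    (hK : ∀ t ∈ Ico 0 b, f' t ≤ K * f t) :
    ∀ t ∈ Icc 0 b, f t ≤ d0 * Real.exp (K * t) := by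
  intro t ht
  have hcont : ContinuousOn f (Icc 0 b) := fun s hs =>
    ((hd s hs).continuousAt).continuousWithinAt
  have := le_gronwallBound_of_liminf_deriv_right_le (f := f) (f' := f') (δ := d0) (K := K)
    (ε := 0) (a := 0) (b := b) hcont
    (fun s hs r hr => slope_freq (hd s (Ico_subset_Icc_self hs)) r hr)
    h0 (fun s hs => by simpa using hK s hs) t ht
  simpa [gronwallBound_ε0] using this

lemma quad_le_aux {n : ℕ} (U : Matrix (Fin n) (Fin n) ℝ) (ev : Fin n → ℝ)
    (hUU : U * Uᵀ = 1) (L : ℝ) (hev : ∀ i, ev i ≤ L) (x : Fin n → ℝ) :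
    x ⬝ᵥ ((U * diagonal ev * Uᵀ) *ᵥ x) ≤ L * (x ⬝ᵥ x) := by
  set y : Fin n → ℝ := Uᵀ *ᵥ x with hy
  have key : x ⬝ᵥ ((U * diagonal ev * Uᵀ) *ᵥ x) = ∑ i, ev i * (y i)^2 := by
    rw [← mulVec_mulVec, ← mulVec_mulVec, dotProduct_mulVec, ← mulVec_transpose, ← hy,
      dotProduct]
    exact Finset.sum_congr rfl fun i _ => by rw [mulVec_diagonal]; ring
  have keyn : x ⬝ᵥ x = ∑ i, (y i)^2 := by
    have h1 : y ⬝ᵥ y = (U *ᵥ y) ⬝ᵥ x := by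
      rw [hy, dotProduct_mulVec, vecMul_transpose]
    have h2 : U *ᵥ y = x := by
      rw [hy, mulVec_mulVec, hUU, one_mulVec]
    have : y ⬝ᵥ y = x ⬝ᵥ x := by rw [h1, h2]
    rw [← this, dotProduct]
    exact Finset.sum_congr rfl fun i _ => by ring
  rw [key, keyn, Finset.mul_sum]
  exact Finset.sum_le_sum fun i _ => by nlinarith [sq_nonneg (y i), hev i]

lemma rayleigh_bound {n : ℕ} (hne : (Finset.univ : Finset (Fin n)).Nonempty)
    (W : Matrix (Fin n) (Fin n) ℝ) (hW : W.IsHermitian) (x : Fin n → ℝ) :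
    x ⬝ᵥ (W *ᵥ x) ≤ (Finset.univ.sup' hne hW.eigenvalues) * (x ⬝ᵥ x) := by
  set U : Matrix (Fin n) (Fin n) ℝ := (hW.eigenvectorUnitary : Matrix (Fin n) (Fin n) ℝ) with hU
  have hstar : star U = Uᵀ := by
    rw [Matrix.star_eq_conjTranspose, conjTranspose_eq_transpose_of_trivial]
  have hUU : U * Uᵀ = 1 := by
    have := (Matrix.mem_unitaryGroup_iff).mp (hW.eigenvectorUnitary).2
    rwa [hstar] at this
  have hdiag : W *ᵥ x = (U * diagonal hW.eigenvalues * Uᵀ) *ᵥ x := by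
    conv_lhs => rw [hW.spectral_theorem]
    rw [Unitary.conjStarAlgAut_apply, ← hU, hstar]
    simp [RCLike.ofReal_real_eq_id, ← hU]
  rw [hdiag]
  exact quad_le_aux U hW.eigenvalues hUU _ (fun i => Finset.le_sup' _ (Finset.mem_univ i)) x

/-- identity: `a(1-x) = -a²` for `a = (x-1)⁺`. -/
lemma relu_id1 (x : ℝ) : max (x - 1) 0 * (1 - x) = -(max (x - 1) 0)^2 := by
  rcases le_or_gt x 1 with h | h
  · rw [max_eq_right (by linarith)]; ring
  · rw [max_eq_left (by linarith)]; ring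

/-- identity: `b(1-x) = b + b²` for `b = (-x)⁺`. -/
lemma relu_id2 (x : ℝ) : max (-x) 0 * (1 - x) = max (-x) 0 + (max (-x) 0)^2 := by
  rcases le_or_gt 0 x with h | h
  · rw [max_eq_right (by linarith)]; ring
  · rw [max_eq_left (by linarith)]; ring

lemma relu_id3 (x : ℝ) : 0 ≤ (max (x - 1) 0 - max (-x) 0) * x := by
  rcases le_or_gt x 0 with h | h
  · rw [max_eq_right (by linarith)]
    nlinarith [le_max_left (-x) 0]
  · rw [max_eq_right (by linarith : -x ≤ 0)]
    nlinarith [le_max_right (x - 1) 0]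

open Filter

set_option maxHeartbeats 1600000 in
theorem linear_upper_bound_global_stability
    (n : ℕ) (hn : 0 < n) (W : Matrix (Fin n) (Fin n) ℝ)
    (hW : W.IsHermitian) (hWnonneg : ∀ i j, 0 ≤ W i j)
    (β δ c : ℝ) (hβ : 0 < β) (hδ : 0 < δ) (hc : 0 < c)
    (hspec : β * c * (Finset.univ.sup' (by simpa using Finset.univ_nonempty_iff.mpr (Fin.pos_iff_nonempty.mp hn)) hW.eigenvalues) < δ)
    (p : ℝ → Fin n → ℝ)
    (hsol : ∀ t : ℝ, 0 ≤ t →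
      HasDerivAt p (fun i => β * c * (∑ j, W i j * p t j) * (1 - p t i) - δ * p t i) t)
    (hinit : ∀ i, p 0 i ∈ Set.Icc (0 : ℝ) 1) :
    Tendsto p atTop (nhds 0) := by
  have hne : (Finset.univ : Finset (Fin n)).Nonempty :=
    Finset.univ_nonempty_iff.mpr (Fin.pos_iff_nonempty.mp hn)
  set L : ℝ := Finset.univ.sup' hne hW.eigenvalues with hL
  have hspec' : β * c * L < δ := hspec
  set F : ℝ → Fin n → ℝ :=
    fun t i => β * c * (∑ j, W i j * p t j) * (1 - p t i) - δ * p t i with hF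
  have hcoord : ∀ t, 0 ≤ t → ∀ i, HasDerivAt (fun s => p s i) (F t i) t := by
    intro t ht i
    simp only [hF]
    exact (hasDerivAt_pi.1 (hsol t ht)) i
  clear_value F
  set a : ℝ → Fin n → ℝ := fun t i => max (p t i - 1) 0 with ha
  set b : ℝ → Fin n → ℝ := fun t i => max (-(p t i)) 0 with hb
  clear_value a b
  have hale : ∀ t j, p t j - 1 ≤ a t j := fun t j => by
    simp only [ha]; exact le_max_left _ _
  have hble : ∀ t j, -(p t j) ≤ b t j := fun t j => by
    simp only [hb]; exact le_max_left _ _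
  have he1 : ∀ t i, a t i * (1 - p t i) = -(a t i)^2 := fun t i => by
    simp only [ha]; exact relu_id1 _
  have he2 : ∀ t i, b t i * (1 - p t i) = b t i + (b t i)^2 := fun t i => by
    simp only [hb]; exact relu_id2 _
  have he3 : ∀ t i, 0 ≤ (a t i - b t i) * p t i := fun t i => by
    simp only [ha, hb]; exact relu_id3 _
  set V1 : ℝ → ℝ := fun t => ∑ i, (a t i ^ 2 + b t i ^ 2) with hV1
  set D1 : ℝ → ℝ := fun t => ∑ i, (2 * a t i * F t i + 2 * b t i * (-(F t i))) with hD1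
  clear_value V1 D1
  have hV1d : ∀ t, 0 ≤ t → HasDerivAt V1 (D1 t) t := by
    intro t ht
    simp only [hV1, hD1, ha, hb]
    exact HasDerivAt.fun_sum fun i _ =>
      ((qsq_hasDerivAt (p t i - 1)).comp t ((hcoord t ht i).sub_const 1)).fun_add
        (by exact (qsq_hasDerivAt (-(p t i))).comp t (hcoord t ht i).fun_neg)
  set V2 : ℝ → ℝ := fun t => ∑ i, p t i ^ 2 with hV2
  set D2 : ℝ → ℝ := fun t => ∑ i, 2 * p t i * F t i with hD2
  clear_value V2 D2
  have hV2d : ∀ t, 0 ≤ t → HasDerivAt V2 (D2 t) t := by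
    intro t ht
    simp only [hV2, hD2]
    have h := HasDerivAt.fun_sum fun i (_ : i ∈ Finset.univ) => (hcoord t ht i).fun_pow 2
    refine h.congr_deriv ?_
    refine Finset.sum_congr rfl fun i _ => ?_
    push_cast
    ring
  have hann : ∀ t i, 0 ≤ a t i := fun t i => by
    simp only [ha]; exact le_max_right _ _
  have hbnn : ∀ t i, 0 ≤ b t i := fun t i => by
    simp only [hb]; exact le_max_right _ _
  have hV1nn : ∀ t, 0 ≤ V1 t := fun t => by
    rw [hV1]
    exact Finset.sum_nonneg fun i _ => by positivity
  have hV10 : V1 0 = 0 := by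
    simp only [hV1, ha, hb]
    refine Finset.sum_eq_zero fun i _ => ?_
    have h := hinit i
    rw [max_eq_right (by linarith [h.2] : p 0 i - 1 ≤ 0),
      max_eq_right (by linarith [h.1] : -(p 0 i) ≤ 0)]
    ring
  set M : ℝ := (∑ i, ∑ j, W i j) + 1 with hM
  have hWsum : (0:ℝ) ≤ ∑ i, ∑ j, W i j :=
    Finset.sum_nonneg fun i _ => Finset.sum_nonneg fun j _ => hWnonneg i j
  have hMpos : 0 < M := by rw [hM]; linarith
  have hWM : ∀ i j, W i j ≤ M := by
    intro i j
    have h1 : W i j ≤ ∑ j', W i j' :=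
      Finset.single_le_sum (fun k _ => hWnonneg i k) (Finset.mem_univ j)
    have h2 : (∑ j', W i j') ≤ ∑ i', ∑ j', W i' j' :=
      Finset.single_le_sum
        (fun k (_ : k ∈ Finset.univ) => Finset.sum_nonneg fun l _ => hWnonneg k l)
        (Finset.mem_univ i)
    rw [hM]; linarith
  set K1 : ℝ := 8 * (β * c) * M * n + 1 with hK1
  clear_value M K1
  -- the key one-sided differential inequality for V1
  have hbound : ∀ t, 0 ≤ t → V1 t ≤ 1 → D1 t ≤ K1 * V1 t := by
    intro t ht hle
    have hsummand : ∀ i, a t i ^ 2 + b t i ^ 2 ≤ V1 t := by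
      intro i
      simp only [hV1]
      exact Finset.single_le_sum (f := fun i => a t i ^ 2 + b t i ^ 2)
        (fun j _ => by positivity) (Finset.mem_univ i)
    have ha1 : ∀ i, a t i ≤ 1 := by
      intro i
      nlinarith [hsummand i, hann t i, hbnn t i, sq_nonneg (b t i)]
    have hb1 : ∀ i, b t i ≤ 1 := by
      intro i
      nlinarith [hsummand i, hann t i, hbnn t i, sq_nonneg (a t i)]
    set T : ℝ := ∑ i, (a t i + b t i) with hT
    clear_value T
    have hTnn : 0 ≤ T := by
      rw [hT]
      exact Finset.sum_nonneg fun i _ => add_nonneg (hann t i) (hbnn t i)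
    have hterm : ∀ i, 2 * a t i * F t i + 2 * b t i * (-(F t i)) ≤
        2 * (β * c) * ((M * T) * (a t i + 2 * b t i)) := by
      intro i
      set S : ℝ := ∑ j, W i j * p t j with hS
      clear_value S
      have hFi : F t i = β * c * S * (1 - p t i) - δ * p t i := by
        simp only [hF, hS]
      have hSneg : -S ≤ ∑ j, W i j * b t j := by
        have h1 : -S = ∑ j, W i j * (-(p t j)) := by
          rw [hS, ← Finset.sum_neg_distrib]
          exact Finset.sum_congr rfl fun j _ => by ring
        rw [h1]
        exact Finset.sum_le_sum fun j _ =>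
          mul_le_mul_of_nonneg_left (hble t j) (hWnonneg i j)
      have hQT : (∑ j, W i j * b t j) ≤ M * T := by
        calc (∑ j, W i j * b t j) ≤ ∑ j, M * b t j :=
              Finset.sum_le_sum fun j _ =>
                mul_le_mul_of_nonneg_right (hWM i j) (hbnn t j)
          _ = M * ∑ j, b t j := by rw [Finset.mul_sum]
          _ ≤ M * T := by
              refine mul_le_mul_of_nonneg_left ?_ hMpos.le
              rw [hT]
              exact Finset.sum_le_sum fun j _ => by linarith [hann t j]
      have e1 : a t i * (1 - p t i) = -(a t i)^2 := he1 t i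
      have e2 : b t i * (1 - p t i) = b t i + (b t i)^2 := he2 t i
      have e3 : 0 ≤ (a t i - b t i) * p t i := he3 t i
      have expand : 2 * a t i * F t i + 2 * b t i * (-(F t i)) =
          2 * (β * c) * (S * ((a t i - b t i) * (1 - p t i)))
            - 2 * δ * ((a t i - b t i) * p t i) := by
        rw [hFi]; ring
      have step2 : S * ((a t i - b t i) * (1 - p t i)) =
          (-S) * ((a t i)^2 + b t i + (b t i)^2) := by
        have hid : (a t i - b t i) * (1 - p t i) = -((a t i)^2 + b t i + (b t i)^2) := by
          rw [sub_mul, e1, e2]; ring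
        rw [hid]; ring
      have step3 : (-S) * ((a t i)^2 + b t i + (b t i)^2) ≤
          (M * T) * ((a t i)^2 + b t i + (b t i)^2) := by
        refine mul_le_mul_of_nonneg_right (le_trans hSneg hQT) ?_
        have := hann t i
        have := hbnn t i
        positivity
      have step4 : (M * T) * ((a t i)^2 + b t i + (b t i)^2) ≤
          (M * T) * (a t i + 2 * b t i) := by
        refine mul_le_mul_of_nonneg_left ?_ (mul_nonneg hMpos.le hTnn)
        nlinarith [ha1 i, hb1 i, hann t i, hbnn t i]
      have hfac : (0:ℝ) ≤ 2 * (β * c) := by positivity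
      calc 2 * a t i * F t i + 2 * b t i * (-(F t i))
          = 2 * (β * c) * (S * ((a t i - b t i) * (1 - p t i)))
            - 2 * δ * ((a t i - b t i) * p t i) := expand
        _ ≤ 2 * (β * c) * (S * ((a t i - b t i) * (1 - p t i))) := by
            linarith [mul_nonneg (by positivity : (0:ℝ) ≤ 2 * δ) e3]
        _ = 2 * (β * c) * ((-S) * ((a t i)^2 + b t i + (b t i)^2)) := by rw [step2]
        _ ≤ 2 * (β * c) * ((M * T) * ((a t i)^2 + b t i + (b t i)^2)) :=
            mul_le_mul_of_nonneg_left step3 hfac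
        _ ≤ 2 * (β * c) * ((M * T) * (a t i + 2 * b t i)) :=
            mul_le_mul_of_nonneg_left step4 hfac
    have hsum1 : D1 t ≤ ∑ i, 2 * (β * c) * ((M * T) * (a t i + 2 * b t i)) := by
      simp only [hD1]
      exact Finset.sum_le_sum fun i _ => hterm i
    have hsum2 : (∑ i, 2 * (β * c) * ((M * T) * (a t i + 2 * b t i)))
        = 2 * (β * c) * M * T * (∑ i, (a t i + 2 * b t i)) := by
      rw [Finset.mul_sum]
      exact Finset.sum_congr rfl fun i _ => by ring
    have hsum3 : (∑ i, (a t i + 2 * b t i)) ≤ 2 * T := by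
      have h1 : (∑ i, (a t i + 2 * b t i)) ≤ ∑ i, 2 * (a t i + b t i) :=
        Finset.sum_le_sum fun i _ => by linarith [hann t i]
      rw [← Finset.mul_sum, ← hT] at h1
      exact h1
    have hT2 : T ^ 2 ≤ n * ∑ i, (a t i + b t i) ^ 2 := by
      have := sq_sum_le_card_mul_sum_sq
        (s := (Finset.univ : Finset (Fin n))) (f := fun i => a t i + b t i)
      simpa [hT] using this
    have hsumsq : (∑ i, (a t i + b t i) ^ 2) ≤ 2 * V1 t := by
      have h1 : (∑ i, (a t i + b t i) ^ 2) ≤ ∑ i, 2 * (a t i ^ 2 + b t i ^ 2) :=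
        Finset.sum_le_sum fun i _ => by nlinarith [sq_nonneg (a t i - b t i)]
      rw [← Finset.mul_sum] at h1
      simpa [hV1] using h1
    have hfac2 : (0:ℝ) ≤ 2 * (β * c) * M := by positivity
    calc D1 t ≤ 2 * (β * c) * M * T * (∑ i, (a t i + 2 * b t i)) := by
          rw [← hsum2]; exact hsum1
      _ ≤ 2 * (β * c) * M * T * (2 * T) := by
          refine mul_le_mul_of_nonneg_left hsum3 ?_
          positivity
      _ = 4 * (β * c) * M * T ^ 2 := by ring
      _ ≤ 4 * (β * c) * M * (n * ∑ i, (a t i + b t i) ^ 2) := by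
          refine mul_le_mul_of_nonneg_left hT2 ?_
          positivity
      _ ≤ 4 * (β * c) * M * (n * (2 * V1 t)) := by
          refine mul_le_mul_of_nonneg_left ?_ (by positivity)
          exact mul_le_mul_of_nonneg_left hsumsq (by positivity)
      _ = 8 * (β * c) * M * n * V1 t := by ring
      _ ≤ K1 * V1 t := by
          refine mul_le_mul_of_nonneg_right ?_ (hV1nn t)
          rw [hK1]; linarith
  -- invariance of [0,1]^n : V1 vanishes identically on [0, ∞)
  have hinv : ∀ t, 0 ≤ t → V1 t = 0 := by
    intro t0 ht0
    by_contra hne0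
    have hpos : 0 < V1 t0 := lt_of_le_of_ne (hV1nn t0) (Ne.symm hne0)
    have hcont : Continuous (fun t => V1 (max t 0)) := by
      rw [continuous_iff_continuousAt]
      intro s
      have h1 : ContinuousAt V1 (max s 0) := (hV1d _ (le_max_right s 0)).continuousAt
      have h2 : ContinuousAt (fun t : ℝ => max t 0) s :=
        (continuous_id.max continuous_const).continuousAt
      exact ContinuousAt.comp h1 h2
    set B : Set ℝ := Set.Icc 0 t0 ∩ (fun t => V1 (max t 0)) ⁻¹' Set.Ici 1 with hB
    have hBbdd : BddBelow B := ⟨0, fun x hx => hx.1.1⟩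
    rcases Set.eq_empty_or_nonempty B with hBe | hBne
    · have hgr := gronwall_wrap (f := V1) (f' := D1) (K := K1) (d0 := 0) (b := t0)
        (fun s hs => hV1d s hs.1) (le_of_eq hV10)
        (fun s hs => by
          refine hbound s hs.1 ?_
          by_contra h
          push_neg at h
          have hsB : s ∈ B := ⟨⟨hs.1, le_trans hs.2.le le_rfl⟩, by
            simp only [Set.mem_preimage, Set.mem_Ici]
            rw [max_eq_left hs.1]; linarith⟩
          rw [hBe] at hsB
          exact hsB)
        t0 ⟨ht0, le_refl t0⟩
      rw [zero_mul] at hgr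
      linarith
    · set τ := sInf B with hτ
      have hBclosed : IsClosed B :=
        IsClosed.inter isClosed_Icc (isClosed_Ici.preimage hcont)
      have hτB : τ ∈ B := hBclosed.csInf_mem hBne hBbdd
      have hτ0 : 0 ≤ τ := hτB.1.1
      have hτ1 : 1 ≤ V1 τ := by
        have h := hτB.2
        simp only [Set.mem_preimage, Set.mem_Ici] at h
        rwa [max_eq_left hτ0] at h
      have hgr := gronwall_wrap (f := V1) (f' := D1) (K := K1) (d0 := 0) (b := τ)
        (fun s hs => hV1d s hs.1)
        (le_of_eq hV10)
        (fun s hs => by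
          refine hbound s hs.1 ?_
          by_contra h
          push_neg at h
          have hsB : s ∈ B := ⟨⟨hs.1, le_trans hs.2.le hτB.1.2⟩, by
            simp only [Set.mem_preimage, Set.mem_Ici]
            rw [max_eq_left hs.1]; linarith⟩
          have := csInf_le hBbdd hsB
          rw [← hτ] at this
          linarith [hs.2])
        τ ⟨hτ0, le_refl τ⟩
      rw [zero_mul] at hgr
      linarith
  have hmem : ∀ t, 0 ≤ t → ∀ i, 0 ≤ p t i ∧ p t i ≤ 1 := by
    intro t ht i
    have h0 := hinv t ht
    simp only [hV1] at h0
    have hall := (Finset.sum_eq_zero_iff_of_nonneg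
      (fun j (_ : j ∈ Finset.univ) => by positivity)).1 h0 i (Finset.mem_univ i)
    have haz : a t i = 0 := by nlinarith [sq_nonneg (a t i), sq_nonneg (b t i)]
    have hbz : b t i = 0 := by nlinarith [sq_nonneg (a t i), sq_nonneg (b t i)]
    constructor
    · have h1 : -(p t i) ≤ b t i := hble t i
      rw [hbz] at h1
      linarith
    · have h1 : p t i - 1 ≤ a t i := hale t i
      rw [haz] at h1
      linarith
  set K2 : ℝ := 2 * (β * c * L - δ) with hK2
  clear_value K2
  have hK2neg : K2 < 0 := by rw [hK2]; linarith
  have hV2bound : ∀ t, 0 ≤ t → D2 t ≤ K2 * V2 t := by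
    intro t ht
    have hp := hmem t ht
    have hexp : D2 t = 2 * (β * c) * (∑ i, p t i * (∑ j, W i j * p t j) * (1 - p t i))
        - 2 * δ * V2 t := by
      simp only [hD2, hV2, hF]
      rw [Finset.mul_sum, Finset.mul_sum, ← Finset.sum_sub_distrib]
      exact Finset.sum_congr rfl fun i _ => by ring
    have hSnn : ∀ i, 0 ≤ ∑ j, W i j * p t j :=
      fun i => Finset.sum_nonneg fun j _ => mul_nonneg (hWnonneg i j) (hp j).1
    have h1 : (∑ i, p t i * (∑ j, W i j * p t j) * (1 - p t i))
        ≤ ∑ i, p t i * (∑ j, W i j * p t j) := by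
      refine Finset.sum_le_sum fun i _ => ?_
      nlinarith [(hp i).1, (hp i).2, hSnn i, mul_nonneg (hp i).1 (hSnn i)]
    have h2 : (∑ i, p t i * (∑ j, W i j * p t j)) = (p t) ⬝ᵥ (W *ᵥ (p t)) := by
      simp only [dotProduct, Matrix.mulVec]
    have h3 := rayleigh_bound hne W hW (p t)
    have h4 : (p t) ⬝ᵥ (p t) = V2 t := by
      simp only [dotProduct, hV2]
      exact Finset.sum_congr rfl fun i _ => (sq (p t i)).symm
    have h5 : (∑ i, p t i * (∑ j, W i j * p t j) * (1 - p t i)) ≤ L * V2 t := by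
      rw [← h4]
      refine le_trans h1 ?_
      rw [h2]
      exact h3
    have h6 := mul_le_mul_of_nonneg_left h5 (by positivity : (0:ℝ) ≤ 2 * (β * c))
    rw [hexp, hK2]
    nlinarith [h6]
  have hV2dec : ∀ t, 0 ≤ t → V2 t ≤ n * Real.exp (K2 * t) := by
    intro t ht
    have h0 : V2 0 ≤ n := by
      simp only [hV2]
      calc (∑ i, p 0 i ^ 2) ≤ ∑ _i : Fin n, (1:ℝ) := by
            refine Finset.sum_le_sum fun i _ => ?_
            nlinarith [(hinit i).1, (hinit i).2]
        _ = n := by simp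
    exact gronwall_wrap (fun s hs => hV2d s hs.1) h0
      (fun s hs => hV2bound s hs.1) t ⟨ht, le_refl t⟩
  rw [tendsto_pi_nhds]
  intro i
  simp only [Pi.zero_apply]
  apply squeeze_zero_norm' (a := fun t => Real.sqrt (n * Real.exp (K2 * t)))
  · filter_upwards [eventually_ge_atTop (0:ℝ)] with t ht
    have h1 : (p t i) ^ 2 ≤ n * Real.exp (K2 * t) := by
      refine le_trans ?_ (hV2dec t ht)
      simp only [hV2]
      exact Finset.single_le_sum (f := fun j => p t j ^ 2)
        (fun j _ => sq_nonneg _) (Finset.mem_univ i)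
    calc ‖p t i‖ = Real.sqrt ((p t i) ^ 2) := by
          rw [Real.sqrt_sq_eq_abs, Real.norm_eq_abs]
      _ ≤ Real.sqrt (n * Real.exp (K2 * t)) := Real.sqrt_le_sqrt h1
  · have h1 : Tendsto (fun t : ℝ => K2 * t) atTop atBot :=
      (tendsto_const_mul_atBot_of_neg hK2neg).2 tendsto_id
    have h2 : Tendsto (fun t : ℝ => Real.exp (K2 * t)) atTop (nhds 0) :=
      Real.tendsto_exp_atBot.comp h1
    have h3 : Tendsto (fun t : ℝ => (n:ℝ) * Real.exp (K2 * t)) atTop (nhds 0) := by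
      simpa using h2.const_mul (n:ℝ)
    have h4 := (Real.continuous_sqrt.tendsto 0).comp h3
    rw [Real.sqrt_zero] at h4
    exact h4
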